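/- Let s ≥ 1, let a : Fin s → ℤ with a i ≥ 1 for all i, and let l be a non-negative integer with 2l ≤ a i for all i. Then every extreme point of the chainlink polytope CL(ā,l) ⊆ ℝ^s has all coordinates in ℤ. -/

import Mathlib

/-- The chainlink polytope `CL(ā,l) ⊆ ℝ^s` (indices taken cyclically). -/
def chainlink (s : ℕ) [NeZero s] (a : Fin s → ℝ) (l : ℝ) : Set (Fin s → ℝ) :=
  {x | (∀ i, 0 ≤ x i ∧ x i ≤ a i) ∧ ∀ i, x i - x (i + 1) ≤ a i - l}

lemma fracA {x : ℝ} {K : ℤ} (h : Int.fract x ≠ 0) (hx : x ≤ K) :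
    x + (1 - Int.fract x) ≤ K := by
  have hfl : x - Int.fract x = ⌊x⌋ := by rw [Int.fract]; ring
  have h1 : ⌊x⌋ ≤ K := by
    have := Int.floor_le_floor (R := ℝ) hx
    simpa using this
  have h2 : ⌊x⌋ ≠ K := by
    intro he
    apply h
    have := Int.floor_le x
    rw [Int.fract]
    rw [he] at this ⊢
    linarith [hx]
  have h3 : ⌊x⌋ + 1 ≤ K := by omega
  have h4 : ((⌊x⌋ : ℝ) + 1) ≤ (K : ℝ) := by exact_mod_cast h3
  linarith

lemma fracB {x : ℝ} {K : ℤ} (hx : (K : ℝ) ≤ x) : (K : ℝ) ≤ x - Int.fract x := by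
  have h1 : K ≤ ⌊x⌋ := Int.le_floor.2 hx
  have h2 : (K : ℝ) ≤ (⌊x⌋ : ℝ) := by exact_mod_cast h1
  rw [Int.fract]
  linarith

/-- every extreme point (vertex) of the chainlink polytope is integral
when `2l ≤ aᵢ` for all `i`. -/
theorem chainlink_extremePoints_integral
    (s : ℕ) [NeZero s] (a : Fin s → ℤ) (ha : ∀ i, 1 ≤ a i)
    (l : ℤ) (hl : 0 ≤ l) (h2l : ∀ i, 2 * l ≤ a i)
    (v : Fin s → ℝ)
    (hv : v ∈ Set.extremePoints ℝ (chainlink s (fun i => (a i : ℝ)) (l : ℝ))) :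
    ∀ i, ∃ m : ℤ, v i = (m : ℝ) := by
  classical
  by_contra hcon
  push_neg at hcon
  obtain ⟨j, hj⟩ := hcon
  obtain ⟨hvmem, hext⟩ := hv
  obtain ⟨hb, hc⟩ := hvmem
  -- fract characterization
  have hPfract : ∀ i : Fin s, Int.fract (v i) = 0 → ∃ m : ℤ, v i = (m : ℝ) := by
    intro i h
    exact ⟨⌊v i⌋, by rw [Int.fract] at h; linarith⟩
  have hjf : Int.fract (v j) ≠ 0 := fun h => hj _ ((hPfract j h).choose_spec)
  set d : Fin s → ℝ := fun i => if Int.fract (v i) = 0 then 0 else 1 with hd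
  set g : Fin s → ℝ :=
    fun i => if Int.fract (v i) = 0 then 1
      else min (Int.fract (v i)) (1 - Int.fract (v i)) with hg
  have hne : (Finset.univ : Finset (Fin s)).Nonempty := Finset.univ_nonempty
  set ε := Finset.univ.inf' hne g with hε
  have hgpos : ∀ i, 0 < g i := by
    intro i
    by_cases h : Int.fract (v i) = 0 <;> simp only [hg, h, if_true, if_false]
    · norm_num
    · exact lt_min (lt_of_le_of_ne (Int.fract_nonneg _) (Ne.symm h))
        (by linarith [Int.fract_lt_one (v i)])
  have hεpos : 0 < ε := (Finset.lt_inf'_iff hne).2 fun i _ => hgpos i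
  have hεle : ∀ i, ε ≤ g i := fun i => Finset.inf'_le _ (Finset.mem_univ i)
  have hεfr : ∀ i, Int.fract (v i) ≠ 0 → ε ≤ Int.fract (v i) ∧ ε ≤ 1 - Int.fract (v i) := by
    intro i h
    have := hεle i
    simp only [hg, h, if_false] at this
    exact ⟨le_trans this (min_le_left _ _), le_trans this (min_le_right _ _)⟩
  -- the two perturbed points
  set x₁ : Fin s → ℝ := fun i => v i + ε * d i with hx₁
  set x₂ : Fin s → ℝ := fun i => v i - ε * d i with hx₂
  -- membership of differences: helper
  have hdiff : ∀ (i : Fin s) (σ : ℝ), σ = 1 ∨ σ = -1 →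
      (v i + σ * ε * d i) - (v (i + 1) + σ * ε * d (i + 1)) ≤ (a i : ℝ) - l := by
    intro i σ hσ
    have hci := hc i
    by_cases h1 : Int.fract (v i) = 0 <;> by_cases h2 : Int.fract (v (i + 1)) = 0
    · simp only [hd, h1, h2, if_true]
      linarith
    · -- v i integral, v (i+1) not
      simp only [hd, h1, h2, if_true, if_false]
      rcases hσ with rfl | rfl
      · have := (hεfr _ h2).1
        have hf := Int.fract_nonneg (v (i + 1))
        linarith
      · obtain ⟨m, hm⟩ := hPfract i h1
        have hKle : ((m - (a i - l) : ℤ) : ℝ) ≤ v (i + 1) := by push_cast; linarith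
        have := fracB hKle
        have hεf := (hεfr _ h2).1
        push_cast at this
        linarith
    · -- v i not integral, v (i+1) integral
      simp only [hd, h1, h2, if_true, if_false]
      rcases hσ with rfl | rfl
      · obtain ⟨m, hm⟩ := hPfract _ h2
        have hle : v i ≤ (((a i - l) + m : ℤ) : ℝ) := by push_cast; linarith
        have := fracA h1 hle
        have hεf := (hεfr _ h1).2
        push_cast at this
        linarith
      · have := (hεfr _ h1).1
        have hf := Int.fract_nonneg (v i)
        linarith
    · simp only [hd, h1, h2, if_false]
      linarith
  have hm₁ : x₁ ∈ chainlink s (fun i => (a i : ℝ)) (l : ℝ) := by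
    constructor
    · intro i
      simp only [hx₁]
      by_cases h : Int.fract (v i) = 0
      · simp only [hd, h, if_true]
        have := hb i
        constructor <;> simp <;> linarith [this.1, this.2]
      · simp only [hd, h, if_false]
        have hεf := (hεfr _ h).2
        obtain ⟨h0, h1⟩ := hb i
        refine ⟨by linarith, ?_⟩
        have := fracA h (K := a i) (by exact_mod_cast h1)
        linarith
    · intro i
      have := hdiff i 1 (Or.inl rfl)
      simp only [hx₁]
      simpa using this
  have hm₂ : x₂ ∈ chainlink s (fun i => (a i : ℝ)) (l : ℝ) := by
    constructor
    · intro i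
      simp only [hx₂]
      by_cases h : Int.fract (v i) = 0
      · simp only [hd, h, if_true]
        have := hb i
        constructor <;> simp <;> linarith [this.1, this.2]
      · simp only [hd, h, if_false]
        have hεf := (hεfr _ h).1
        obtain ⟨h0, h1⟩ := hb i
        have hB := fracB (x := v i) (K := 0) (by exact_mod_cast h0)
        push_cast at hB
        exact ⟨by linarith, by linarith⟩
    · intro i
      have := hdiff i (-1) (Or.inr rfl)
      simp only [hx₂]
      have e : ∀ y z : ℝ, v i + (-1) * ε * y - (v (i+1) + (-1) * ε * z)
          = v i - ε * y - (v (i+1) - ε * z) := by intros; ring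
      rw [e] at this
      exact this
  -- v is the midpoint of x₁ and x₂
  have hmid : v ∈ openSegment ℝ x₁ x₂ := by
    refine ⟨1/2, 1/2, by norm_num, by norm_num, by norm_num, ?_⟩
    funext i
    simp only [hx₁, hx₂, Pi.add_apply, Pi.smul_apply, smul_eq_mul]
    ring
  have := hext hm₁ hm₂ hmid
  have hx1v : x₁ = v := this
  have : x₁ j = v j := by rw [hx1v]
  simp only [hx₁, hd, hjf, if_false, mul_one] at this
  linarith
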